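/- Let X be a projective T-variety admitting a filtration ∅ = Z_0 ⊂ Z_1 ⊂ … ⊂ Z_m = X into closed T-stable subvarieties with X^T = {x_1,…,x_m}, x_i ∈ W_i = Z_i \ Z_{i−1}, such that each (Z_i, T) is a GKM-variety and suitable equivariant Euler classes Eu_T(x_i, Z_i) ∈ S exist. Suppose {θ^{(i)}} and {ψ^{(i)}} are two families in H_T^•(X) (identified with their images under localisation to the fixed points, so each class is a tuple of elements of S = H_T^•(pt)) both satisfying: (1) I_i(θ^{(i)}) = 1; (2) I_j(θ^{(i)}) = 0 for j ≠ i; (3) θ^{(i)}_{x_j} = 0 for j < i; (4) θ^{(i)}_{x_i} = Eu_T(x_i, Z_i); where I_j(f) = Σ_{x_k ∈ Z_j} f_{x_k} / Eu_T(x_k, Z_j). Then θ^{(i)} = ψ^{(i)} for all i. -/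

import Mathlib

open scoped BigOperators

/-- The local index `I_j(f)` of a localised equivariant cohomology class
`f = (f_{x_1}, …, f_{x_m})` at the fixed point `x_j`:
`I_j(f) = Σ_{x_k ∈ Z_j} f_{x_k} / Eu_T(x_k, Z_j)`;
the fixed points of the filtration step `Z_j` are `x_1, …, x_j`. -/
noncomputable def localIndex {S : Type*} [CommRing S] [IsDomain S] {m : ℕ}
    (Eu : Fin m → Fin m → FractionRing S) (f : Fin m → S) (j : Fin m) :
    FractionRing S :=
  ∑ k ∈ Finset.univ.filter (fun k : Fin m => k ≤ j),
    algebraMap S (FractionRing S) (f k) / Eu j k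

/-- **uniqueness of the distinguished module basis.**  Let `X` be a
projective `T`-variety with a filtration `∅ = Z_0 ⊂ Z_1 ⊂ … ⊂ Z_m = X` into closed
`T`-stable subvarieties, fixed points `x_1, …, x_m` with `x_i ∈ W_i = Z_i \ Z_{i-1}`
(so the fixed points of `Z_j` are `x_1, …, x_j`), each `(Z_i, T)` a GKM-variety, with
(nonzero) equivariant Euler classes `Eu j k = Eu_T(x_k, Z_j)` in the fraction field `Q`
of `S = H_T^•(pt)`.  If two families `θ, ψ` of localised classes (each class a tuple over
the fixed points with entries in `S`) both satisfy
(1) `I_i(θ^{(i)}) = 1`, (2) `I_j(θ^{(i)}) = 0` for `j ≠ i`,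
(3) `θ^{(i)}_{x_j} = 0` for `j < i`, (4) `θ^{(i)}_{x_i} = Eu_T(x_i, Z_i)`,
then `θ = ψ`. -/
theorem distinguished_basis_unique
    {S : Type*} [CommRing S] [IsDomain S] {m : ℕ}
    (Eu : Fin m → Fin m → FractionRing S)
    (hEu : ∀ j k : Fin m, k ≤ j → Eu j k ≠ 0)
    (θ ψ : Fin m → Fin m → S)
    (hθ1 : ∀ i, localIndex Eu (θ i) i = 1)
    (hθ2 : ∀ i j, j ≠ i → localIndex Eu (θ i) j = 0)
    (hθ3 : ∀ i j, j < i → θ i j = 0)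
    (hθ4 : ∀ i, algebraMap S (FractionRing S) (θ i i) = Eu i i)
    (hψ1 : ∀ i, localIndex Eu (ψ i) i = 1)
    (hψ2 : ∀ i j, j ≠ i → localIndex Eu (ψ i) j = 0)
    (hψ3 : ∀ i j, j < i → ψ i j = 0)
    (hψ4 : ∀ i, algebraMap S (FractionRing S) (ψ i i) = Eu i i) :
    θ = ψ := by
  funext i
  have hI : ∀ j, localIndex Eu (θ i) j = localIndex Eu (ψ i) j := by
    intro j
    by_cases h : j = i
    · subst h; rw [hθ1, hψ1]
    · rw [hθ2 i j h, hψ2 i j h]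
  funext j
  induction j using WellFoundedLT.induction with
  | _ j ih =>
    have h := hI j
    have hset : Finset.univ.filter (fun k : Fin m => k ≤ j)
        = insert j (Finset.univ.filter (fun k : Fin m => k < j)) := by
      ext k
      simp [le_iff_lt_or_eq, or_comm]
    rw [localIndex, localIndex, hset,
      Finset.sum_insert (by simp), Finset.sum_insert (by simp)] at h
    have hrest : ∑ k ∈ Finset.univ.filter (fun k : Fin m => k < j),
        algebraMap S (FractionRing S) (θ i k) / Eu j k
        = ∑ k ∈ Finset.univ.filter (fun k : Fin m => k < j),
        algebraMap S (FractionRing S) (ψ i k) / Eu j k := by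
      refine Finset.sum_congr rfl fun k hk => ?_
      rw [ih k (Finset.mem_filter.mp hk).2]
    rw [hrest] at h
    have h2 := add_right_cancel h
    have hne := hEu j j le_rfl
    field_simp at h2
    exact IsFractionRing.injective S (FractionRing S) h2
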